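/- Let U ⊆ ℂ be an open set and let f, ζ, h : ℂ → ℂ be functions such that f and ζ are real-differentiable at every point of U, and such that for all z ∈ U the Wirtinger equations ∂ζ/∂z̄(z) = h(z) and ∂f/∂z̄(z) + h(z)·f(z) = 0 hold. Then the function z ↦ f(z)·exp(ζ(z)) is holomorphic on U (i.e., complex-differentiable at every point of U). -/

import Mathlib

/-- The Wirtinger derivative ∂g/∂z̄ of `g : ℂ → ℂ` at `z`, defined via the real
Fréchet derivative as `(1/2)(Dg(z)(1) + i·Dg(z)(i))`. -/
noncomputable def wirtingerBar (g : ℂ → ℂ) (z : ℂ) : ℂ :=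
  (1 / 2 : ℂ) * (fderiv ℝ g z 1 + Complex.I * fderiv ℝ g z Complex.I)

/-- If `f` and `ζ` are real-differentiable on an open set `U ⊆ ℂ` and satisfy
`∂ζ/∂z̄ = h` and `∂f/∂z̄ + h·f = 0` on `U`, then `z ↦ f z * exp (ζ z)` is
holomorphic on `U`. -/
theorem holomorphic_of_wirtinger_eq (U : Set ℂ) (hU : IsOpen U)
    (f ζ h : ℂ → ℂ)
    (hf : ∀ z ∈ U, DifferentiableAt ℝ f z)
    (hζ : ∀ z ∈ U, DifferentiableAt ℝ ζ z)
    (hζeq : ∀ z ∈ U, wirtingerBar ζ z = h z)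
    (hfeq : ∀ z ∈ U, wirtingerBar f z + h z * f z = 0) :
    ∀ z ∈ U, DifferentiableAt ℂ (fun w => f w * Complex.exp (ζ w)) z := by
  intro z hz
  have hfz := (hf z hz).hasFDerivAt
  have hζz := (hζ z hz).hasFDerivAt
  set Lf := fderiv ℝ f z with hLf
  set Lζ := fderiv ℝ ζ z with hLζ
  have hexp1 := (Complex.hasDerivAt_exp (ζ z)).hasFDerivAt
  have hexp : HasFDerivAt (fun w => Complex.exp (ζ w))
      ((Complex.exp (ζ z)) • Lζ) z := by
    have h2 := (hexp1.restrictScalars ℝ).comp z hζz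
    refine h2.congr_fderiv ?_
    ext w
    simp [mul_comm]
  have hg := hfz.mul hexp
  set L := f z • Complex.exp (ζ z) • Lζ + Complex.exp (ζ z) • Lf with hL
  have e1 := hζeq z hz
  have e2 := hfeq z hz
  rw [wirtingerBar, ← hLζ] at e1
  rw [wirtingerBar, ← hLf] at e2
  have key : Complex.I * L Complex.I + L 1 = 0 := by
    simp only [hL, ContinuousLinearMap.add_apply, ContinuousLinearMap.smul_apply,
      smul_eq_mul]
    linear_combination 2 * Complex.exp (ζ z) * e2 + 2 * f z * Complex.exp (ζ z) * e1
  have key2 : L Complex.I = Complex.I * L 1 := by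
    linear_combination (-Complex.I) * key + (L Complex.I) * Complex.I_sq
  have hdR : DifferentiableAt ℝ (fun w => f w * Complex.exp (ζ w)) z :=
    hg.differentiableAt
  rw [differentiableAt_iff_restrictScalars ℝ hdR]
  refine ⟨(L 1) • (1 : ℂ →L[ℂ] ℂ), ?_⟩
  rw [HasFDerivAt.fderiv (f := fun w => f w * Complex.exp (ζ w)) hg]
  ext w
  have hw : w = (w.re : ℝ) • (1 : ℂ) + (w.im : ℝ) • Complex.I := by
    simp [Complex.real_smul]
  calc ((L 1 • (1 : ℂ →L[ℂ] ℂ)).restrictScalars ℝ) w = w * L 1 := by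
        simp [mul_comm]
    _ = L w := by
        conv_rhs => rw [hw]
        rw [map_add, map_smul, map_smul, key2, Complex.real_smul, Complex.real_smul]
        nth_rewrite 1 [← Complex.re_add_im w]
        ring
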